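/- (Recursion for g_k.) Let k ≥ 3. For all x : Fin k → ZMod 12, one has g_k (x 0, x 1, …, x (k−1)) = ∑_{b ∈ {0,1,2,3}} g_{k−1} (x 0, x 1 + b·x 2, x 3, …, x (k−1)) + ∑_{a ∈ {0,2}} g_{k−1} (x 0, a·x 1 + x 2, x 3, …, x (k−1)) + ∑_{a ∈ {0,2}} ∑_{b ∈ {0,2}} g_{k−1} (x 0, a·x 1 + b·x 2, x 3, …, x (k−1)), where on the right g_{k−1} is applied to the (k−1)-tuple obtained from x by replacing the pair (x 1, x 2) by the single indicated entry. -/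

import Mathlib

open scoped Classical in
/-- The function `g_{k+1}`: it takes value `4` exactly when the first
coordinate is odd and all other coordinates lie in `C = {0,4,8}`. -/
noncomputable def gfun (k : ℕ) : (Fin (k + 1) → ZMod 12) → ZMod 12 := fun x =>
  if Odd (x 0) ∧ ∀ i, i ≠ 0 → x i ∈ ({0, 4, 8} : Set (ZMod 12)) then 4 else 0

/-- From a `(m+3)`-tuple `x`, the `(m+2)`-tuple obtained by replacing the pair
`(x 1, x 2)` by the single entry `u`. -/
def collapse (m : ℕ) (x : Fin (m + 3) → ZMod 12) (u : ZMod 12) :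
    Fin (m + 2) → ZMod 12 := fun i =>
  if (i : ℕ) = 0 then x 0 else if (i : ℕ) = 1 then u else x i.succ

def inC (u : ZMod 12) : Prop := u = 0 ∨ u = 4 ∨ u = 8

instance : DecidablePred inC := fun _ => inferInstanceAs (Decidable (_ ∨ _))

theorem memC_iff (u : ZMod 12) : u ∈ ({0, 4, 8} : Set (ZMod 12)) ↔ inC u := by
  simp [inC, Set.mem_insert_iff]

theorem key (u v : ZMod 12) :
    (if inC u ∧ inC v then (4 : ZMod 12) else 0) =
      (∑ b ∈ ({0, 1, 2, 3} : Finset (ZMod 12)), if inC (u + b * v) then (4 : ZMod 12) else 0) +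
      (∑ a ∈ ({0, 2} : Finset (ZMod 12)), if inC (a * u + v) then (4 : ZMod 12) else 0) +
      (∑ a ∈ ({0, 2} : Finset (ZMod 12)), ∑ b ∈ ({0, 2} : Finset (ZMod 12)),
        if inC (a * u + b * v) then (4 : ZMod 12) else 0) := by
  revert u v; decide

theorem collapse_zero (m : ℕ) (x : Fin (m + 3) → ZMod 12) (u : ZMod 12) :
    collapse m x u 0 = x 0 := rfl

theorem collapse_one (m : ℕ) (x : Fin (m + 3) → ZMod 12) (u : ZMod 12) :
    collapse m x u 1 = u := by
  simp [collapse]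

theorem collapse_ge (m : ℕ) (x : Fin (m + 3) → ZMod 12) (u : ZMod 12)
    (j : Fin (m + 2)) (hj : 2 ≤ (j : ℕ)) :
    collapse m x u j = x j.succ := by
  simp only [collapse]
  rw [if_neg (by omega), if_neg (by omega)]

open scoped Classical in
theorem gfun_collapse (m : ℕ) (x : Fin (m + 3) → ZMod 12) (u : ZMod 12) :
    gfun (m + 1) (collapse m x u) =
      if Odd (x 0) ∧ inC u ∧ (∀ i : Fin (m + 3), 3 ≤ (i : ℕ) → inC (x i)) then 4 else 0 := by
  unfold gfun
  refine if_congr ?_ rfl rfl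
  constructor
  · rintro ⟨h0, h⟩
    refine ⟨h0, ?_, ?_⟩
    · have := h 1 (by simp [Fin.ext_iff])
      rw [collapse_one] at this
      exact (memC_iff u).1 this
    · intro i hi
      have hlt : (i : ℕ) - 1 < m + 2 := by omega
      set j : Fin (m + 2) := ⟨(i : ℕ) - 1, hlt⟩ with hjdef
      have hj0 : j ≠ 0 := by
        intro hc
        have : (j : ℕ) = 0 := by rw [hc]; rfl
        simp [hjdef] at this; omega
      have := h j hj0
      rw [collapse_ge m x u j (by simp [hjdef]; omega)] at this
      have hsucc : j.succ = i := by
        apply Fin.ext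
        simp [hjdef, Fin.val_succ]
        omega
      rw [hsucc] at this
      exact (memC_iff _).1 this
  · rintro ⟨h0, hu, hT⟩
    refine ⟨h0, ?_⟩
    intro i hi
    rcases Nat.lt_or_ge (i : ℕ) 2 with h | h
    · have h1 : (i : ℕ) = 1 := by
        have : (i : ℕ) ≠ 0 := fun hc => hi (Fin.ext (by simpa using hc))
        omega
      have : i = 1 := Fin.ext (by simpa using h1)
      rw [this, collapse_one]
      exact (memC_iff u).2 hu
    · rw [collapse_ge m x u i h]
      refine (memC_iff _).2 (hT i.succ ?_)
      simp [Fin.val_succ]; omega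

open scoped Classical in
theorem gfun_top (m : ℕ) (x : Fin (m + 3) → ZMod 12) :
    gfun (m + 2) x =
      if Odd (x 0) ∧ (inC (x 1) ∧ inC (x 2)) ∧
          (∀ i : Fin (m + 3), 3 ≤ (i : ℕ) → inC (x i)) then 4 else 0 := by
  unfold gfun
  refine if_congr ?_ rfl rfl
  constructor
  · rintro ⟨h0, h⟩
    refine ⟨h0, ⟨(memC_iff _).1 (h 1 (by simp [Fin.ext_iff])), (memC_iff _).1 (h 2 (by simp [Fin.ext_iff]; rw [Nat.mod_eq_of_lt (by omega)]; omega))⟩, ?_⟩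
    intro i hi
    exact (memC_iff _).1 (h i (fun hc => by simp [hc] at hi))
  · rintro ⟨h0, ⟨h1, h2⟩, hT⟩
    refine ⟨h0, ?_⟩
    intro i hi
    have hi0 : (i : ℕ) ≠ 0 := fun hc => hi (Fin.ext (by simpa using hc))
    rcases Nat.lt_or_ge (i : ℕ) 3 with h | h
    · interval_cases hv : (i : ℕ)
      · omega
      · have : i = 1 := Fin.ext (by simpa using hv)
        rw [this]; exact (memC_iff _).2 h1
      · have : i = 2 := Fin.ext (by rw [hv]; simp; rw [Nat.mod_eq_of_lt (by omega)])
        rw [this]; exact (memC_iff _).2 h2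
    · exact (memC_iff _).2 (hT i h)

theorem stmt_8 (m : ℕ) (x : Fin (m + 3) → ZMod 12) :
    gfun (m + 2) x =
      (∑ b ∈ ({0, 1, 2, 3} : Finset (ZMod 12)),
        gfun (m + 1) (collapse m x (x 1 + b * x 2))) +
      (∑ a ∈ ({0, 2} : Finset (ZMod 12)),
        gfun (m + 1) (collapse m x (a * x 1 + x 2))) +
      (∑ a ∈ ({0, 2} : Finset (ZMod 12)), ∑ b ∈ ({0, 2} : Finset (ZMod 12)),
        gfun (m + 1) (collapse m x (a * x 1 + b * x 2))) := by
  by_cases H : Odd (x 0) ∧ (∀ i : Fin (m + 3), 3 ≤ (i : ℕ) → inC (x i))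
  · have hg : ∀ u : ZMod 12, gfun (m + 1) (collapse m x u) =
        if inC u then (4 : ZMod 12) else 0 := by
      intro u
      rw [gfun_collapse]
      by_cases hu : inC u
      · rw [if_pos ⟨H.1, hu, H.2⟩, if_pos hu]
      · rw [if_neg (fun hc => hu hc.2.1), if_neg hu]
    have hL : gfun (m + 2) x = if inC (x 1) ∧ inC (x 2) then (4 : ZMod 12) else 0 := by
      rw [gfun_top]
      by_cases h12 : inC (x 1) ∧ inC (x 2)
      · rw [if_pos ⟨H.1, h12, H.2⟩, if_pos h12]
      · rw [if_neg (fun hc => h12 hc.2.1), if_neg h12]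
    rw [hL]
    simp only [hg]
    exact key (x 1) (x 2)
  · have hg : ∀ u : ZMod 12, gfun (m + 1) (collapse m x u) = 0 := by
      intro u
      rw [gfun_collapse, if_neg (fun hc => H ⟨hc.1, hc.2.2⟩)]
    have hL : gfun (m + 2) x = 0 := by
      rw [gfun_top, if_neg (fun hc => H ⟨hc.1, hc.2.2⟩)]
    simp [hg, hL]
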